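/- Let ψ ∈ ℂ^{d_A} ⊗ ℂ^{d_B} be a unit vector and ρ = ψψ* the corresponding pure-state density matrix. Then the operator Schmidt span of ρ with respect to the first factor equals the full matrix algebra on the support of the reduced state: Σ_A(ρ) = {X ∈ M_{d_A} : Π X Π = X}, where Π is the orthogonal projection onto the range of the partial trace Tr_B(ρ) (given entrywise by (Tr_B ρ)_{a,a'} = Σ_b ρ_{(a,b),(a',b)}). -/

import Mathlib

open Matrix
open scoped ComplexOrder Kronecker

/-- The subspace `W ⊗ M_{d_B}` of matrices on `ℂ^{d_A} ⊗ ℂ^{d_B}`: the span of Kronecker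
products `A ⊗ₖ B` with `A ∈ W`. -/
noncomputable def tensorExt {dA dB : ℕ} (W : Submodule ℂ (Matrix (Fin dA) (Fin dA) ℂ)) :
    Submodule ℂ (Matrix (Fin dA × Fin dB) (Fin dA × Fin dB) ℂ) :=
  Submodule.span ℂ {Z | ∃ A ∈ W, ∃ B : Matrix (Fin dB) (Fin dB) ℂ, Z = A ⊗ₖ B}

/-- The operator Schmidt span `Σ_A(ρ)` of a matrix on `ℂ^{d_A} ⊗ ℂ^{d_B}`: the smallest
subspace `W` of `M_{d_A}` with `ρ ∈ W ⊗ M_{d_B}`. -/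
noncomputable def opSchmidtSpan {dA dB : ℕ}
    (ρ : Matrix (Fin dA × Fin dB) (Fin dA × Fin dB) ℂ) :
    Submodule ℂ (Matrix (Fin dA) (Fin dA) ℂ) :=
  sInf {W | ρ ∈ tensorExt (dB := dB) W}

/-- The partial trace over the second tensor factor. -/
noncomputable def ptraceB {dA dB : ℕ} (ρ : Matrix (Fin dA × Fin dB) (Fin dA × Fin dB) ℂ) :
    Matrix (Fin dA) (Fin dA) ℂ :=
  Matrix.of fun a a' => ∑ b, ρ (a, b) (a', b)

namespace OSSAux

variable {dA dB : ℕ}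

/-- Outer product of two vectors. -/
noncomputable def outer (u w : Fin dA → ℂ) : Matrix (Fin dA) (Fin dA) ℂ :=
  Matrix.of fun a a' => u a * star (w a')

lemma outer_apply (u w : Fin dA → ℂ) (a a' : Fin dA) :
    outer u w a a' = u a * star (w a') := rfl

lemma outer_add_left (u u' w : Fin dA → ℂ) : outer (u + u') w = outer u w + outer u' w := by
  ext a a'; simp [outer, add_mul]

lemma outer_smul_left (c : ℂ) (u w : Fin dA → ℂ) : outer (c • u) w = c • outer u w := by
  ext a a'; simp [outer, mul_assoc]

lemma outer_zero_left (w : Fin dA → ℂ) : outer (0 : Fin dA → ℂ) w = 0 := by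
  ext a a'; simp [outer]

lemma outer_add_right (u w w' : Fin dA → ℂ) : outer u (w + w') = outer u w + outer u w' := by
  ext a a'; simp [outer, mul_add]

lemma outer_smul_right (c : ℂ) (u w : Fin dA → ℂ) :
    outer u (c • w) = star c • outer u w := by
  ext a a'; simp [outer]; ring

lemma outer_zero_right (u : Fin dA → ℂ) : outer u (0 : Fin dA → ℂ) = 0 := by
  ext a a'; simp [outer]

lemma mul_outer (P : Matrix (Fin dA) (Fin dA) ℂ) (u w : Fin dA → ℂ) :
    P * outer u w = outer (P.mulVec u) w := by
  ext a a'
  simp only [outer, Matrix.mul_apply, Matrix.of_apply, Matrix.mulVec, dotProduct,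
    Finset.sum_mul]
  exact Finset.sum_congr rfl fun j _ => by ring

lemma outer_mul (u w : Fin dA → ℂ) (P : Matrix (Fin dA) (Fin dA) ℂ) (hP : Pᴴ = P) :
    outer u w * P = outer u (P.mulVec w) := by
  ext a a'
  simp only [outer, Matrix.mul_apply, Matrix.of_apply, Matrix.mulVec, dotProduct,
    star_sum, star_mul', Finset.mul_sum]
  refine Finset.sum_congr rfl fun j _ => ?_
  have h : star (P a' j) = P j a' := by
    conv_rhs => rw [← hP]
    simp [Matrix.conjTranspose_apply]
  rw [h]; ring

/-- Entry extraction on the second factor, as a linear map. -/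
noncomputable def entryMap (b b' : Fin dB) :
    Matrix (Fin dA × Fin dB) (Fin dA × Fin dB) ℂ →ₗ[ℂ] Matrix (Fin dA) (Fin dA) ℂ where
  toFun Z := Matrix.of fun a a' => Z (a, b) (a', b')
  map_add' _ _ := rfl
  map_smul' _ _ := rfl

lemma entryMap_mem {W : Submodule ℂ (Matrix (Fin dA) (Fin dA) ℂ)}
    {Z : Matrix (Fin dA × Fin dB) (Fin dA × Fin dB) ℂ} (hZ : Z ∈ tensorExt (dB := dB) W)
    (b b' : Fin dB) : entryMap b b' Z ∈ W := by
  refine Submodule.span_induction (p := fun Z _ => entryMap (dA := dA) b b' Z ∈ W)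
    ?_ ?_ ?_ ?_ hZ
  · rintro _ ⟨A, hA, B, rfl⟩
    have h : entryMap (dA := dA) b b' (A ⊗ₖ B) = B b b' • A := by
      ext a a'
      simp [entryMap, Matrix.kroneckerMap_apply, mul_comm]; rfl
    rw [h]; exact W.smul_mem _ hA
  · simpa using W.zero_mem
  · intro x y _ _ hx hy; rw [map_add]; exact W.add_mem hx hy
  · intro c x _ hx; rw [LinearMap.map_smul]; exact W.smul_mem c hx

lemma sum_mul_star_eq_zero {ι : Type*} [Fintype ι] {c : ι → ℂ}
    (h : ∑ i, c i * star (c i) = 0) (i : ι) : c i = 0 := by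
  have h2 : ((∑ j, Complex.normSq (c j) : ℝ) : ℂ) = 0 := by
    push_cast
    calc (∑ j, (Complex.normSq (c j) : ℂ)) = ∑ j, c j * star (c j) :=
          Finset.sum_congr rfl fun j _ => by rw [Complex.star_def, Complex.mul_conj]
    _ = 0 := h
  have h' : ∑ j, Complex.normSq (c j) = 0 := by exact_mod_cast h2
  have := (Finset.sum_eq_zero_iff_of_nonneg
    (fun j _ => Complex.normSq_nonneg (c j))).mp h' i (Finset.mem_univ i)
  exact Complex.normSq_eq_zero.mp this

end OSSAux

open OSSAux

/-- For a pure state `ρ = ψψ*`, the operator Schmidt span with respect to the first factor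
is the full matrix algebra on the support of the reduced state: `Σ_A(ρ) = {X | Pr X Pr = X}`,
where `Pr` is the orthogonal projection onto the range of `Tr_B(ρ)`. -/
theorem opSchmidtSpan_of_pure_state {dA dB : ℕ}
    (ψ : Fin dA × Fin dB → ℂ) (hψ : ∑ i, ψ i * star (ψ i) = 1)
    (ρ : Matrix (Fin dA × Fin dB) (Fin dA × Fin dB) ℂ)
    (hρ : ρ = Matrix.of fun i j => ψ i * star (ψ j))
    (Pr : Matrix (Fin dA) (Fin dA) ℂ)
    (hPr : Prᴴ = Pr ∧ Pr * Pr = Pr ∧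
      LinearMap.range Pr.mulVecLin = LinearMap.range (ptraceB ρ).mulVecLin) :
    ∀ X : Matrix (Fin dA) (Fin dA) ℂ, X ∈ opSchmidtSpan ρ ↔ Pr * X * Pr = X := by
  obtain ⟨hPrH, hPr2, hPrR⟩ := hPr
  -- the column vectors of ψ
  set v : Fin dB → (Fin dA → ℂ) := fun b a => ψ (a, b) with hv
  set V : Submodule ℂ (Fin dA → ℂ) := Submodule.span ℂ (Set.range v) with hV
  set W0 : Submodule ℂ (Matrix (Fin dA) (Fin dA) ℂ) :=
    Submodule.span ℂ {M | ∃ b b', M = outer (v b) (v b')} with hW0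
  have vmem : ∀ b, v b ∈ V := fun b => Submodule.subset_span ⟨b, rfl⟩
  -- Step 1: the operator Schmidt span is W0
  have hρsum : ρ = ∑ b : Fin dB, ∑ b' : Fin dB,
      outer (v b) (v b') ⊗ₖ Matrix.single b b' (1 : ℂ) := by
    ext ⟨a, c⟩ ⟨a', c'⟩
    simp only [hρ, Matrix.sum_apply, Matrix.kroneckerMap_apply, Matrix.of_apply,
      Matrix.single, outer_apply, mul_ite, mul_one, mul_zero, ite_and]
    rw [Finset.sum_comm]
    simp [Finset.sum_ite_eq, hv]
  have hρW0 : ρ ∈ tensorExt (dB := dB) W0 := by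
    rw [hρsum]
    refine Submodule.sum_mem _ fun b _ => Submodule.sum_mem _ fun b' _ => ?_
    exact Submodule.subset_span ⟨outer (v b) (v b'), Submodule.subset_span ⟨b, b', rfl⟩, _, rfl⟩
  have hentry : ∀ b b', entryMap (dA := dA) b b' ρ = outer (v b) (v b') := by
    intro b b'; ext a a'; simp [entryMap, hρ, outer_apply, hv]; rfl
  have hOSS : opSchmidtSpan ρ = W0 := by
    refine le_antisymm (sInf_le hρW0) (le_sInf ?_)
    intro W hW
    rw [hW0, Submodule.span_le]
    rintro _ ⟨b, b', rfl⟩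
    rw [← hentry b b']
    exact entryMap_mem hW b b'
  -- Step 2: the reduced state's action
  have hσmv : ∀ x : Fin dA → ℂ,
      (ptraceB ρ).mulVec x = ∑ b, (star (v b) ⬝ᵥ x) • v b := by
    intro x; funext a
    simp only [ptraceB, Matrix.mulVec, dotProduct, Matrix.of_apply, hρ,
      Finset.sum_apply, Pi.smul_apply, smul_eq_mul, Finset.sum_mul, Pi.star_apply]
    rw [Finset.sum_comm]
    refine Finset.sum_congr rfl fun b _ => Finset.sum_congr rfl fun a' _ => ?_
    simp [hv]; ring
  have hmaps : ∀ x : Fin dA → ℂ, (ptraceB ρ).mulVecLin x ∈ V := fun x => by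
    rw [Matrix.mulVecLin_apply, hσmv]
    exact Submodule.sum_mem _ fun b _ => Submodule.smul_mem _ _ (vmem b)
  -- injectivity on V
  have hker : ∀ x, x ∈ V → (ptraceB ρ).mulVec x = 0 → x = 0 := by
    intro x hxV hx0
    have hsw : ∀ b, star x ⬝ᵥ v b = star (star (v b) ⬝ᵥ x) := by
      intro b
      simp only [dotProduct, star_sum, star_mul', star_star, Pi.star_apply]
      exact Finset.sum_congr rfl fun a _ => by ring
    let ℓ : (Fin dA → ℂ) →ₗ[ℂ] ℂ :=
      { toFun := fun y => star x ⬝ᵥ y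
        map_add' := fun y z => by simp [dotProduct_add]
        map_smul' := fun c y => by simp [dotProduct_smul] }
    have hℓ : ∀ y, ℓ y = star x ⬝ᵥ y := fun y => rfl
    have hquad : ∑ b, (star (v b) ⬝ᵥ x) * star (star (v b) ⬝ᵥ x) = 0 := by
      have h1 : ℓ ((ptraceB ρ).mulVec x) = 0 := by rw [hx0]; simp [hℓ]
      rw [hσmv, map_sum] at h1
      calc ∑ b, (star (v b) ⬝ᵥ x) * star (star (v b) ⬝ᵥ x)
          = ∑ b, ℓ ((star (v b) ⬝ᵥ x) • v b) := by
            refine Finset.sum_congr rfl fun b _ => ?_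
            rw [LinearMap.map_smul, hℓ, hsw b, smul_eq_mul]
        _ = 0 := h1
    have hc : ∀ b, star (v b) ⬝ᵥ x = 0 := fun b => sum_mul_star_eq_zero hquad b
    have hVl : V ≤ LinearMap.ker ℓ := by
      rw [hV, Submodule.span_le]
      rintro _ ⟨b, rfl⟩
      simp only [SetLike.mem_coe, LinearMap.mem_ker]
      show star x ⬝ᵥ v b = 0
      rw [hsw b, hc b, star_zero]
    have hxx : ∑ a, star (x a) * x a = 0 := hVl hxV
    have hxx' : ∑ a, x a * star (x a) = 0 := by
      rw [← hxx]; exact Finset.sum_congr rfl fun a _ => mul_comm _ _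
    funext a
    exact sum_mul_star_eq_zero hxx' a
  have hrange : LinearMap.range (ptraceB ρ).mulVecLin = V := by
    apply le_antisymm
    · rintro _ ⟨x, rfl⟩; exact hmaps x
    · rw [hV, Submodule.span_le]
      rintro _ ⟨b, rfl⟩
      let f := LinearMap.restrict (p := V) (q := V) (ptraceB ρ).mulVecLin (fun x _ => hmaps x)
      have hinj : Function.Injective f := by
        intro x y hxy
        have h1 : (ptraceB ρ).mulVec ((x : Fin dA → ℂ) - y) = 0 := by
          have h2 := congrArg Subtype.val hxy
          simp only [f, LinearMap.restrict_apply, Matrix.mulVecLin_apply] at h2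
          rw [Matrix.mulVec_sub, sub_eq_zero]
          exact h2
        have h3 := hker _ (Submodule.sub_mem V x.2 y.2) h1
        exact Subtype.ext (sub_eq_zero.mp h3)
      have hsurj := LinearMap.injective_iff_surjective.mp hinj
      obtain ⟨x, hx⟩ := hsurj ⟨v b, vmem b⟩
      refine ⟨x, ?_⟩
      have := congrArg Subtype.val hx
      simpa [f, LinearMap.restrict_apply] using this
  have hPrrange : LinearMap.range Pr.mulVecLin = V := by rw [hPrR, hrange]
  have hPrfix : ∀ u ∈ V, Pr.mulVec u = u := by
    intro u hu
    have h1 : u ∈ LinearMap.range Pr.mulVecLin := by rw [hPrrange]; exact hu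
    obtain ⟨w, hw⟩ := h1
    rw [Matrix.mulVecLin_apply] at hw
    rw [← hw, Matrix.mulVec_mulVec, hPr2]
  -- outer products of vectors in V lie in W0
  have houter : ∀ u ∈ V, ∀ w ∈ V, outer u w ∈ W0 := by
    intro u hu
    refine Submodule.span_induction
      (p := fun u _ => ∀ w ∈ V, outer u w ∈ W0) ?_ ?_ ?_ ?_ hu
    · rintro _ ⟨b, rfl⟩ w hw
      refine Submodule.span_induction
        (p := fun w _ => outer (v b) w ∈ W0) ?_ ?_ ?_ ?_ hw
      · rintro _ ⟨b', rfl⟩; exact Submodule.subset_span ⟨b, b', rfl⟩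
      · show outer (v b) 0 ∈ W0
        rw [outer_zero_right]; exact W0.zero_mem
      · intro w1 w2 _ _ ih1 ih2
        show outer (v b) (w1 + w2) ∈ W0
        rw [outer_add_right]; exact W0.add_mem ih1 ih2
      · intro c w _ ih
        show outer (v b) (c • w) ∈ W0
        rw [outer_smul_right]; exact W0.smul_mem _ ih
    · intro w hw
      show outer 0 w ∈ W0
      rw [outer_zero_left]; exact W0.zero_mem
    · intro u1 u2 _ _ ih1 ih2 w hw
      show outer (u1 + u2) w ∈ W0
      rw [outer_add_left]; exact W0.add_mem (ih1 w hw) (ih2 w hw)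
    · intro c u _ ih w hw
      show outer (c • u) w ∈ W0
      rw [outer_smul_left]; exact W0.smul_mem _ (ih w hw)
  -- the equivalence
  intro X
  rw [hOSS]
  constructor
  · intro hX
    refine Submodule.span_induction (p := fun X _ => Pr * X * Pr = X) ?_ ?_ ?_ ?_ hX
    · rintro _ ⟨b, b', rfl⟩
      rw [mul_outer, outer_mul _ _ _ hPrH, hPrfix _ (vmem b), hPrfix _ (vmem b')]
    · simp
    · intro x y _ _ ihx ihy; rw [mul_add, add_mul, ihx, ihy]
    · intro c x _ ih; rw [mul_smul_comm, smul_mul_assoc, ih]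
  · intro hX
    -- columns of Pr
    set p : Fin dA → (Fin dA → ℂ) := fun j => Pr.mulVec (Pi.single j 1) with hp
    have hpV : ∀ j, p j ∈ V := fun j => by
      rw [← hPrrange]; exact ⟨Pi.single j 1, rfl⟩
    have hpa : ∀ j a, p j a = Pr a j := by
      intro j a
      simp [hp, Matrix.mulVec, dotProduct_single]
    have hXsum : Pr * X * Pr = ∑ j : Fin dA, ∑ k : Fin dA, X j k • outer (p j) (p k) := by
      ext a a'
      simp only [Matrix.sum_apply, Matrix.smul_apply, smul_eq_mul, outer_apply]
      have hstar : ∀ k, star (p k a') = Pr k a' := by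
        intro k
        rw [hpa]
        conv_rhs => rw [← hPrH]
        simp [Matrix.conjTranspose_apply]
      simp only [Matrix.mul_apply, Finset.sum_mul]
      rw [Finset.sum_comm]
      refine Finset.sum_congr rfl fun j _ => Finset.sum_congr rfl fun k _ => ?_
      rw [hpa, hstar]; ring
    rw [← hX, hXsum]
    exact Submodule.sum_mem _ fun j _ => Submodule.sum_mem _ fun k _ =>
      Submodule.smul_mem _ _ (houter _ (hpV j) _ (hpV k))
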